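/- Let n = 2m for some m ∈ ℤ_{>0}, and fix observed data (Y, Z). Then there exists a potential outcome table w that is possible given (Y, Z) and satisfies τ(w) = T(Y, Z); concretely, a table with count vector (0, n₁₁ + n₀₀, n₁₀ + n₀₁, 0) works. -/

import Mathlib

open Finset

/-- Real value of a binary outcome. -/
noncomputable def b2r (b : Bool) : ℝ := if b then 1 else 0

/-- All assignments of `n` subjects in which exactly `m` receive treatment. -/
def Assign (n m : ℕ) : Finset (Fin n → Bool) :=
  Finset.univ.filter fun z => (Finset.univ.filter fun i => z i = true).card = m

/-- Probability of the event `E` under the uniform distribution on `Assign n m`. -/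
noncomputable def Pr (n m : ℕ) (E : (Fin n → Bool) → Prop) : ℝ :=
  haveI : DecidablePred E := fun z => Classical.propDecidable (E z)
  (((Assign n m).filter E).card : ℝ) / ((Assign n m).card : ℝ)

/-- The sample average treatment effect `τ(w)`.  For a table `w`, `(w i).1` is the
control potential outcome `w_i(0)` and `(w i).2` is the treatment potential outcome
`w_i(1)`. -/
noncomputable def sate (n : ℕ) (w : Fin n → Bool × Bool) : ℝ :=
  (∑ j, (b2r (w j).2 - b2r (w j).1)) / (n : ℝ)

/-- Observed outcomes generated by the table `w` under the assignment `z`. -/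
def obsOutcome (n : ℕ) (w : Fin n → Bool × Bool) (z : Fin n → Bool) : Fin n → Bool :=
  fun j => if z j then (w j).2 else (w j).1

/-- The Neyman difference-in-means estimator `T(Y, z)`. -/
noncomputable def neyman (n m : ℕ) (Y z : Fin n → Bool) : ℝ :=
  (∑ j, if z j then b2r (Y j) else 0) / (m : ℝ)
    - (∑ j, if z j then 0 else b2r (Y j)) / ((n : ℝ) - (m : ℝ))

/-- Permutation `p`-value of the table `w` given observed data `(Y, z)`. -/
noncomputable def pval (n m : ℕ) (w : Fin n → Bool × Bool) (Y z : Fin n → Bool) : ℝ :=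
  Pr n m fun z' =>
    |neyman n m (obsOutcome n w z') z' - sate n w| ≥ |neyman n m Y z - sate n w|

/-- The table `w` is possible given the observed data `(Y, z)`. -/
def PossibleTable (n : ℕ) (w : Fin n → Bool × Bool) (Y z : Fin n → Bool) : Prop :=
  ∀ j, (z j = true → (w j).2 = Y j) ∧ (z j = false → (w j).1 = Y j)

/-- Lower endpoint `L_α` of the exact confidence interval `I_α`. -/
noncomputable def Lb (n m : ℕ) (α : ℝ) (Y z : Fin n → Bool) : ℝ :=
  sInf {t : ℝ | ∃ w, PossibleTable n w Y z ∧ α ≤ pval n m w Y z ∧ sate n w = t}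

/-- Upper endpoint `U_α` of the exact confidence interval `I_α`. -/
noncomputable def Ub (n m : ℕ) (α : ℝ) (Y z : Fin n → Bool) : ℝ :=
  sSup {t : ℝ | ∃ w, PossibleTable n w Y z ∧ α ≤ pval n m w Y z ∧ sate n w = t}

/-- `vcount n w a b` is the number of subjects whose treatment potential outcome is `a`
and whose control potential outcome is `b`; e.g. `vcount n w true false = v₁₀`. -/
def vcount (n : ℕ) (w : Fin n → Bool × Bool) (a b : Bool) : ℕ :=
  (Finset.univ.filter fun i => (w i).2 = a ∧ (w i).1 = b).card

/-- `ncount n Y z a b = n_{ab}`, the number of subjects with assignment `a` and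
observed outcome `b`. -/
def ncount (n : ℕ) (Y z : Fin n → Bool) (a b : Bool) : ℕ :=
  (Finset.univ.filter fun j => z j = a ∧ Y j = b).card

/-- The pmf of the Neyman estimator `T(w, Z)` under the uniform random assignment. -/
noncomputable def pmfT (n m : ℕ) (w : Fin n → Bool × Bool) : ℝ → ℝ :=
  fun t => Pr n m fun z => neyman n m (obsOutcome n w z) z = t

/-- The lattice `m⁻¹ ℤ ⊆ ℝ`. -/
def lattZ (m : ℕ) : Set ℝ := {x | ∃ k : ℤ, x = (k : ℝ) / (m : ℝ)}

/-- The lattice `m⁻¹ (2ℤ) ⊆ ℝ`. -/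
def lattEven (m : ℕ) : Set ℝ := {x | ∃ k : ℤ, x = (2 * (k : ℝ)) / (m : ℝ)}

/-- The lattice `m⁻¹ (2ℤ + 1) ⊆ ℝ`. -/
def lattOdd (m : ℕ) : Set ℝ := {x | ∃ k : ℤ, x = (2 * (k : ℝ) + 1) / (m : ℝ)}

/-- `f` is symmetric about `μ` and decreasing away from `μ` along the lattice `L`
(symmetric–decreasing, SD). -/
def SDon (f : ℝ → ℝ) (L : Set ℝ) (μ : ℝ) : Prop :=
  (∀ x : ℝ, μ + x ∈ L → f (μ - x) = f (μ + x)) ∧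
    ∀ x y : ℝ, 0 ≤ x → x ≤ y → μ + x ∈ L → μ + y ∈ L → f (μ + y) ≤ f (μ + x)

/-- In a balanced design, for any observed data `(Y, Z)` there exists a
potential outcome table `w` that is possible given `(Y, Z)` with `τ(w) = T(Y, Z)`;
concretely, one with count vector `(0, n₁₁ + n₀₀, n₁₀ + n₀₁, 0)`. -/
theorem stmt6 (m : ℕ) (hm : 0 < m) (n : ℕ) (hn : n = 2 * m)
    (Y z : Fin n → Bool) (hz : z ∈ Assign n m) :
    ∃ w : Fin n → Bool × Bool, PossibleTable n w Y z ∧ sate n w = neyman n m Y z ∧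
      vcount n w true true = 0 ∧
      vcount n w true false = ncount n Y z true true + ncount n Y z false false ∧
      vcount n w false true = ncount n Y z true false + ncount n Y z false true ∧
      vcount n w false false = 0 := by
  classical
  refine ⟨fun j => (if z j then !Y j else Y j, if z j then Y j else !Y j), ?_, ?_, ?_, ?_, ?_, ?_⟩
  · intro j
    constructor <;> intro h <;> simp [h]
  · -- sate = neyman
    have hcard : ((Finset.univ.filter fun i => z i = true).card = m) := by
      have := hz
      simpa [Assign] using this
    have hm' : (m : ℝ) ≠ 0 := Nat.cast_ne_zero.mpr hm.ne'
    set A : ℝ := ∑ j, (if z j then b2r (Y j) else 0) with hA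
    set B : ℝ := ∑ j, (if z j then 0 else b2r (Y j)) with hB
    have hsum1 : (∑ j, (if z j then (1:ℝ) else 0)) = (m : ℝ) := by
      rw [Finset.sum_boole]
      exact_mod_cast congrArg (Nat.cast : ℕ → ℝ) hcard
    have hsum0 : (∑ j, (if z j then (-1:ℝ) else 1)) = (n : ℝ) - 2 * (m : ℝ) := by
      have hp : ∀ j ∈ (Finset.univ : Finset (Fin n)),
          (if z j then (-1:ℝ) else 1) = 1 - 2 * (if z j then (1:ℝ) else 0) := by
        intro j _; by_cases h : z j = true <;> simp [h] <;> norm_num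
      rw [Finset.sum_congr rfl hp, Finset.sum_sub_distrib, ← Finset.mul_sum, hsum1]
      simp
    have hAB : A - B = ∑ j, ((if z j then b2r (Y j) else 0) - (if z j then 0 else b2r (Y j))) :=
      (Finset.sum_sub_distrib _ _).symm
    have hS : (∑ j, (b2r (if z j then Y j else !Y j) - b2r (if z j then !Y j else Y j)))
        = 2 * (A - B) + ((n : ℝ) - 2 * (m : ℝ)) := by
      have hp : ∀ j ∈ (Finset.univ : Finset (Fin n)),
          (b2r (if z j then Y j else !Y j) - b2r (if z j then !Y j else Y j))
            = 2 * ((if z j then b2r (Y j) else 0) - (if z j then 0 else b2r (Y j)))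
              + (if z j then (-1:ℝ) else 1) := by
        intro j _
        by_cases hzj : z j = true <;> by_cases hYj : Y j = true <;>
          simp [hzj, hYj, b2r] <;> ring
      rw [Finset.sum_congr rfl hp, Finset.sum_add_distrib, ← Finset.mul_sum, hsum0, hAB]
    simp only [sate, neyman]
    have hnr : (n : ℝ) = 2 * (m : ℝ) := by rw [hn]; push_cast; ring
    rw [hS, hnr]
    have h3 : 2 * (m:ℝ) - (m:ℝ) = (m:ℝ) := by ring
    rw [h3]
    field_simp
    ring
  · -- vcount true true = 0
    simp only [vcount]
    rw [Finset.card_eq_zero, Finset.filter_eq_empty_iff]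
    intro j _
    by_cases hzj : z j = true <;> by_cases hYj : Y j = true <;> simp [hzj, hYj]
  · -- vcount true false
    simp only [vcount, ncount, Finset.card_filter]
    rw [← Finset.sum_add_distrib]
    apply Finset.sum_congr rfl
    intro j _
    by_cases hzj : z j = true <;> by_cases hYj : Y j = true <;> simp [hzj, hYj]
  · simp only [vcount, ncount, Finset.card_filter]
    rw [← Finset.sum_add_distrib]
    apply Finset.sum_congr rfl
    intro j _
    by_cases hzj : z j = true <;> by_cases hYj : Y j = true <;> simp [hzj, hYj]
  · simp only [vcount]
    rw [Finset.card_eq_zero, Finset.filter_eq_empty_iff]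
    intro j _
    by_cases hzj : z j = true <;> by_cases hYj : Y j = true <;> simp [hzj, hYj]
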